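/- Let k, k̂ > 0, ζ, ζ̂ ∈ ℝ, Δ ∈ (0, π/4], and suppose |ζ - ζ̂| < π/2 - Δ. Define ζ̂₁ = ζ̂ - Δ, ζ̂₂ = ζ̂ + Δ, c₁ = (k/k̂)·cos(ζ - ζ̂₁), c₂ = (k/k̂)·cos(ζ - ζ̂₂). Then c₁ ≠ 0 and ζ = ζ̂₁ + arctan((c₂/c₁ - cos(2Δ))/sin(2Δ)). -/
import Mathlib


open Real

theorem calibration_phase_recovery
    (k khat ζ ζhat Δ ζhat1 ζhat2 c1 c2 : ℝ)
    (hk : 0 < k) (hkhat : 0 < khat)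
    (hΔ : Δ ∈ Set.Ioc 0 (Real.pi / 4))
    (hclose : |ζ - ζhat| < Real.pi / 2 - Δ)
    (h1 : ζhat1 = ζhat - Δ) (h2 : ζhat2 = ζhat + Δ)
    (hc1 : c1 = (k / khat) * Real.cos (ζ - ζhat1))
    (hc2 : c2 = (k / khat) * Real.cos (ζ - ζhat2)) :
    c1 ≠ 0 ∧
      ζ = ζhat1 + Real.arctan ((c2 / c1 - Real.cos (2 * Δ)) / Real.sin (2 * Δ)) := by
  obtain ⟨hΔ0, hΔpi⟩ := hΔ
  have hpi := Real.pi_pos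
  set θ := ζ - ζhat1 with hθ
  have habs := abs_lt.mp hclose
  have hθlt : θ < Real.pi / 2 := by
    rw [hθ, h1]; linarith [habs.2]
  have hθgt : -(Real.pi / 2) < θ := by
    rw [hθ, h1]; linarith [habs.1]
  have hcosθ : 0 < Real.cos θ := Real.cos_pos_of_mem_Ioo ⟨hθgt, hθlt⟩
  have hk' : 0 < k / khat := div_pos hk hkhat
  have hc1pos : 0 < c1 := by rw [hc1]; exact mul_pos hk' hcosθ
  have hsin : 0 < Real.sin (2 * Δ) := by
    apply Real.sin_pos_of_pos_of_lt_pi (by linarith)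
    linarith
  refine ⟨ne_of_gt hc1pos, ?_⟩
  have hsub : ζ - ζhat2 = θ - 2 * Δ := by rw [hθ, h1, h2]; ring
  have hratio : c2 / c1 = Real.cos (θ - 2 * Δ) / Real.cos θ := by
    rw [hc1, hc2, hsub, mul_div_mul_left _ _ (ne_of_gt hk')]
  have harg : (c2 / c1 - Real.cos (2 * Δ)) / Real.sin (2 * Δ) = Real.tan θ := by
    rw [hratio, Real.cos_sub, Real.tan_eq_sin_div_cos]
    field_simp
    ring
  rw [harg, Real.arctan_tan hθgt hθlt]
  rw [hθ]; ring
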